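/- With X^{i_1...i_n} the iterated q-commutators as above, ∂_{i_1} X^{i_1 i_2 ... i_n} = (1 − q_{i_1 i_2} q_{i_2 i_1}) Y^{i_2...i_n}, where Y^{i_2} = e_{i_2} and Y^{i_2...i_p} = [Y^{i_2...i_{p-1}}, e_{i_p}]_{b(i_2...i_p)} with b(i_2...i_p) = q_{i_1 i_p} · a(i_1 i_2 ... i_p). (Here a(i_1...i_p) = ∏_{r<p} q_{i_p i_r}.) -/

import Mathlib

open scoped BigOperators

noncomputable section

/-- The free unital ℂ-algebra on `N` generators, realized as the monoid algebra
of the free monoid on `Fin N`. -/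
abbrev FA (N : ℕ) : Type := MonoidAlgebra ℂ (FreeMonoid (Fin N))

/-- The generator `e i`. -/
def gen {N : ℕ} (i : Fin N) : FA N :=
  MonoidAlgebra.of ℂ (FreeMonoid (Fin N)) (FreeMonoid.of i)

/-- The monomial `e_{i₁} ⋯ e_{iₙ}` attached to a word. -/
def mono {N : ℕ} (w : List (Fin N)) : FA N :=
  MonoidAlgebra.of ℂ (FreeMonoid (Fin N)) (FreeMonoid.ofList w)

/-- The q-differential on monomials: `∂ᵢ(e_j x) = δᵢⱼ x + qᵢⱼ e_j ∂ᵢ x`, `∂ᵢ 1 = 0`. -/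
def Dword {N : ℕ} (q : Fin N → Fin N → ℂ) (i : Fin N) : List (Fin N) → FA N
  | [] => 0
  | j :: w => (if i = j then mono w else 0) + q i j • (gen j * Dword q i w)

/-- The q-differential operator `∂ᵢ`, extended linearly from monomials. -/
def D {N : ℕ} (q : Fin N → Fin N → ℂ) (i : Fin N) (x : FA N) : FA N :=
  Finsupp.sum x.coeff fun w c => c • Dword q i (FreeMonoid.toList w)


/-- Iterated q-commutators `X^{i₁...iₚ}` (recursion on the reversed index list), with
commutation factors `a(i₁...iₚ) = ∏_{r<p} q_{iₚ i_r}`. -/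
def Xrev {N : ℕ} (q : Fin N → Fin N → ℂ) : List (Fin N) → FA N
  | [] => 1
  | [j] => gen j
  | j :: w => Xrev q w * gen j - ((w.map (q j)).prod) • (gen j * Xrev q w)

def Xiter {N : ℕ} (q : Fin N → Fin N → ℂ) (l : List (Fin N)) : FA N :=
  Xrev q l.reverse

/-- The modified iterated commutators `Y^{i₂...iₚ}` (relative to the removed first index `j`),
with commutation factors `b_j(i₂...iₚ) = q_{j iₚ} a(j i₂...iₚ) = q_{j iₚ} q_{iₚ j} ∏_{2≤r<p} q_{iₚ i_r}`. -/
def Yrev {N : ℕ} (q : Fin N → Fin N → ℂ) (j : Fin N) : List (Fin N) → FA N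
  | [] => 1
  | [i] => gen i
  | i :: w => Yrev q j w * gen i - (q j i * q i j * (w.map (q i)).prod) • (gen i * Yrev q j w)

def Yiter {N : ℕ} (q : Fin N → Fin N → ℂ) (j : Fin N) (l : List (Fin N)) : FA N :=
  Yrev q j l.reverse


section Aux

variable {N : ℕ} (q : Fin N → Fin N → ℂ) (i j : Fin N)

lemma mono_nil : mono ([] : List (Fin N)) = 1 := rfl
lemma mono_singleton : mono [j] = gen j := rfl
lemma mono_cons (w : List (Fin N)) : mono (j :: w) = gen j * mono w := by
  simp [mono, gen, ← map_mul]
lemma mono_append (v w : List (Fin N)) : mono (v ++ w) = mono v * mono w := by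
  simp [mono, gen, ← map_mul]
lemma mono_append_gen (w : List (Fin N)) : mono (w ++ [j]) = mono w * gen j := by
  rw [mono_append, mono_singleton]

lemma D_eq (x : FA N) :
    D q i x =
      Finsupp.linearCombination ℂ (fun w => Dword q i (FreeMonoid.toList w)) x.coeff := rfl

lemma D_zero : D q i 0 = 0 := by rw [D_eq, MonoidAlgebra.coeff_zero, map_zero]
lemma D_add (x y : FA N) : D q i (x + y) = D q i x + D q i y := by
  simp only [D_eq, MonoidAlgebra.coeff_add, map_add]
lemma D_smul (c : ℂ) (x : FA N) : D q i (c • x) = c • D q i x := by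
  simp only [D_eq, MonoidAlgebra.coeff_smul, map_smul]
lemma D_sub (x y : FA N) : D q i (x - y) = D q i x - D q i y := by
  simp only [D_eq, MonoidAlgebra.coeff_sub, map_sub]
lemma D_mono (w : List (Fin N)) : D q i (mono w) = Dword q i w := by
  rw [D_eq]
  show Finsupp.linearCombination ℂ _ (Finsupp.single (FreeMonoid.ofList w) 1) = _
  rw [Finsupp.linearCombination_single, one_smul, FreeMonoid.toList_ofList]
lemma single_eq_smul_mono (a : FreeMonoid (Fin N)) (b : ℂ) :
    (MonoidAlgebra.single a b : FA N) = b • mono (FreeMonoid.toList a) := by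
  rw [mono]
  show MonoidAlgebra.single a b = b • MonoidAlgebra.single (FreeMonoid.ofList (FreeMonoid.toList a)) 1
  rw [FreeMonoid.ofList_toList, MonoidAlgebra.smul_single, smul_eq_mul, mul_one]

/-- The twist algebra map `e_k ↦ q i k • e_k`. -/
noncomputable def Tw (q : Fin N → Fin N → ℂ) (i : Fin N) : FA N →ₐ[ℂ] FA N :=
  MonoidAlgebra.lift ℂ (FA N) (FreeMonoid (Fin N))
    (FreeMonoid.lift fun k => (q i k • gen k : FA N))

lemma Tw_gen (k : Fin N) : Tw q i (gen k) = q i k • gen k := by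
  simp [Tw, gen]

lemma Tw_mono (w : List (Fin N)) :
    Tw q i (mono w) = ((w.map (q i)).prod) • mono w := by
  induction w with
  | nil => simp [mono_nil]
  | cons k w ih =>
      rw [mono_cons, map_mul, Tw_gen, ih]
      simp [smul_smul, smul_mul_assoc, mul_smul_comm, mul_comm]

lemma Dword_cons (w : List (Fin N)) :
    Dword q i (j :: w) = (if i = j then mono w else 0) + q i j • (gen j * Dword q i w) := rfl

lemma Dword_append_gen (w : List (Fin N)) :
    Dword q i (w ++ [j]) =
      Dword q i w * gen j + (if i = j then ((w.map (q i)).prod) • mono w else 0) := by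
  induction w with
  | nil =>
      simp [Dword, mono_nil]
  | cons k w ih =>
      rw [List.cons_append, Dword_cons, Dword_cons, ih]
      by_cases h : i = k <;> by_cases h' : i = j <;>
        simp [h, h', mono_append_gen, mono_cons, mul_add, add_mul, smul_add, smul_mul_assoc,
          mul_smul_comm, smul_smul, mul_assoc] <;> abel

lemma D_mul_gen (x : FA N) :
    D q i (x * gen j) = D q i x * gen j + (if i = j then Tw q i x else 0) := by
  induction x using MonoidAlgebra.induction_linear with
  | zero => simp [D_zero]
  | add x y hx hy =>
      rw [add_mul, D_add, hx, hy, D_add, map_add, add_mul]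
      split_ifs <;> abel
  | single a b =>
      rw [single_eq_smul_mono, smul_mul_assoc, ← mono_append_gen, D_smul, D_smul,
        D_mono, D_mono, Dword_append_gen, map_smul, Tw_mono]
      split_ifs <;> simp [smul_add, smul_smul] <;> abel

lemma D_gen_mul (x : FA N) :
    D q i (gen j * x) = (if i = j then x else 0) + q i j • (gen j * D q i x) := by
  induction x using MonoidAlgebra.induction_linear with
  | zero => simp [D_zero]
  | add x y hx hy =>
      rw [mul_add, D_add, hx, hy, D_add, mul_add, smul_add]
      split_ifs <;> abel
  | single a b =>
      rw [single_eq_smul_mono, mul_smul_comm, ← mono_cons, D_smul, D_smul, D_mono,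
        D_mono, Dword_cons]
      split_ifs <;> simp [smul_add, smul_smul, mul_smul_comm, mul_comm]

lemma Xrev_cons (k : Fin N) (w : List (Fin N)) :
    Xrev q (j :: k :: w) =
      Xrev q (k :: w) * gen j - (((k :: w).map (q j)).prod) • (gen j * Xrev q (k :: w)) := rfl

lemma Yrev_cons (m k : Fin N) (w : List (Fin N)) :
    Yrev q m (j :: k :: w) =
      Yrev q m (k :: w) * gen j
        - (q m j * q j m * (((k :: w).map (q j)).prod)) • (gen j * Yrev q m (k :: w)) := rfl

lemma Tw_Xrev (w : List (Fin N)) :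
    Tw q i (Xrev q w) = ((w.map (q i)).prod) • Xrev q w := by
  induction w with
  | nil => simp [Xrev]
  | cons k w ih =>
      cases w with
      | nil => simp [Xrev, Tw_gen]
      | cons m w' =>
          rw [Xrev_cons, map_sub, map_mul, map_smul, map_mul, ih, Tw_gen]
          simp [smul_sub, smul_smul, smul_mul_assoc, mul_smul_comm, mul_comm, mul_assoc,
            mul_left_comm]

end Aux

section Aux2

variable {N : ℕ} (q : Fin N → Fin N → ℂ) (j : Fin N)

lemma Xrev_cons' (w : List (Fin N)) (h : w ≠ []) :
    Xrev q (j :: w) = Xrev q w * gen j - ((w.map (q j)).prod) • (gen j * Xrev q w) := by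
  cases w with
  | nil => exact absurd rfl h
  | cons k w' => rfl

lemma Yrev_cons' (m : Fin N) (w : List (Fin N)) (h : w ≠ []) :
    Yrev q m (j :: w) =
      Yrev q m w * gen j - (q m j * q j m * ((w.map (q j)).prod)) • (gen j * Yrev q m w) := by
  cases w with
  | nil => exact absurd rfl h
  | cons k w' => rfl

end Aux2

/-- `∂_{i₁} X^{i₁ i₂ ... iₙ} = (1 − q_{i₁ i₂} q_{i₂ i₁}) Y^{i₂...iₙ}`. -/
theorem D_Xiter_head {N : ℕ} (q : Fin N → Fin N → ℂ) (hq : ∀ i j, q i j ≠ 0)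
    (i₁ i₂ : Fin N) (l : List (Fin N)) :
    D q i₁ (Xiter q (i₁ :: i₂ :: l)) =
      (1 - q i₁ i₂ * q i₂ i₁) • Yiter q i₁ (i₂ :: l) := by
  have key : ∀ rl : List (Fin N),
      D q i₁ (Xrev q (rl ++ [i₂, i₁])) =
        (1 - q i₁ i₂ * q i₂ i₁) • Yrev q i₁ (rl ++ [i₂]) := by
    intro rl
    induction rl with
    | nil =>
        have hx : Xrev q ([] ++ [i₂, i₁]) =
            mono [i₁, i₂] - (q i₂ i₁ * 1) • mono [i₂, i₁] := by
          rw [List.nil_append, Xrev_cons]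
          simp [Xrev, mono_cons, mono_singleton, mono_nil]
        rw [hx, D_sub, D_smul, D_mono, D_mono]
        show _ = _ • Yrev q i₁ [i₂]
        by_cases h : i₁ = i₂
        · subst h
          simp only [Dword_cons, show Dword q i₁ ([] : List (Fin N)) = 0 from rfl,
            if_pos rfl, mono_singleton, mono_nil, mul_zero, smul_zero, add_zero,
            show Yrev q i₁ [i₁] = gen i₁ from rfl]
          simp only [eq_self_iff_true, if_true, smul_add, smul_smul, mul_one, one_mul,
            mul_smul_comm, smul_mul_assoc]
          module
        · simp only [Dword_cons, show Dword q i₁ ([] : List (Fin N)) = 0 from rfl,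
            if_pos rfl, if_neg h, mono_singleton, mono_nil, mul_zero, smul_zero, add_zero,
            zero_add, show Yrev q i₁ [i₂] = gen i₂ from rfl]
          simp only [eq_self_iff_true, if_true, smul_add, smul_smul, mul_one, one_mul,
            mul_smul_comm, smul_mul_assoc]
          module
    | cons j rl ih =>
        have hprod : ((rl ++ [i₂, i₁]).map (q j)).prod =
            ((rl ++ [i₂]).map (q j)).prod * q j i₁ := by
          have : rl ++ [i₂, i₁] = (rl ++ [i₂]) ++ [i₁] := by simp
          rw [this]; simp [mul_assoc]
        rw [List.cons_append, Xrev_cons' q j _ (by simp), D_sub, D_smul, D_mul_gen,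
          D_gen_mul, ih, List.cons_append, Yrev_cons' q j i₁ _ (by simp), hprod]
        by_cases h : i₁ = j
        · subst h
          rw [if_pos rfl, if_pos rfl, Tw_Xrev, hprod]
          simp only [smul_add, smul_sub, smul_smul, mul_smul_comm, smul_mul_assoc]
          module
        · rw [if_neg h, if_neg h]
          simp only [add_zero, smul_add, smul_sub, smul_smul, mul_smul_comm, smul_mul_assoc,
            smul_zero, zero_add]
          module
  have hrev : (i₁ :: i₂ :: l).reverse = l.reverse ++ [i₂, i₁] := by simp
  have hrev2 : (i₂ :: l).reverse = l.reverse ++ [i₂] := by simp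
  rw [Xiter, Yiter, hrev, hrev2, key]
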